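/- Let α be an ordinal and consider the graph G(α,132) whose vertices are pairs (x,y) of elements of α with x < y, with an edge between (x,y) and (y,z) whenever x < y < z. If {(a₁,a₂),(b₁,b₂)} is a pair of distinct vertices having at least two common neighbours, then a₁ = b₁ or a₂ = b₂. -/

import Mathlib

/-- Vertices: pairs of ordinals `(x, y)` with `x < y < o`. -/
abbrev OV (o : Ordinal) := {p : Ordinal × Ordinal // p.1 < p.2 ∧ p.2 < o}

/-- The shift graph `G(o, 132)` on an ordinal `o`. -/
def OG132 (o : Ordinal) : SimpleGraph (OV o) where
  Adj a b := a.val.2 = b.val.1 ∨ b.val.2 = a.val.1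
  symm := ⟨fun a b h => Or.symm h⟩
  loopless := ⟨fun a h => by rcases h with h | h <;> exact a.prop.1.ne' h⟩

/-- Two distinct vertices of `G(α,132)` with at least two common neighbours agree in
their first or their second coordinate. -/
theorem stmt_1 (α : Ordinal) (a b : OV α) (hab : a ≠ b)
    (h : ∃ c d : OV α, c ≠ d ∧
      (OG132 α).Adj a c ∧ (OG132 α).Adj b c ∧ (OG132 α).Adj a d ∧ (OG132 α).Adj b d) :
    a.val.1 = b.val.1 ∨ a.val.2 = b.val.2 := by
  obtain ⟨c, d, hcd, hac, hbc, had, hbd⟩ := h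
  have ha := a.prop.1
  have hb := b.prop.1
  have hc := c.prop.1
  have hd := d.prop.1
  rcases hac with h1 | h1 <;> rcases hbc with h2 | h2 <;>
    rcases had with h3 | h3 <;> rcases hbd with h4 | h4 <;>
    first
      | exact Or.inr (h1.trans h2.symm)
      | exact Or.inr (h3.trans h4.symm)
      | exact Or.inl (h1.symm.trans h2)
      | exact Or.inl (h3.symm.trans h4)
      | exact absurd (Subtype.ext (Prod.ext_iff.mpr ⟨h1.symm.trans h3, h2.trans h4.symm⟩)) hcd
      | exact absurd (Subtype.ext (Prod.ext_iff.mpr ⟨h2.symm.trans h4, h1.trans h3.symm⟩)) hcd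
      | exact absurd ((((((((ha.trans_eq h1).trans hc).trans_eq h2).trans hb).trans_eq
          h4).trans hd).trans_eq h3)) (lt_irrefl _)
      | exact absurd ((((((((hb.trans_eq h2).trans hc).trans_eq h1).trans ha).trans_eq
          h3).trans hd).trans_eq h4)) (lt_irrefl _)
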